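/- There does not exist a connected signed graph Σ on n vertices such that λ_n(D^max(Σ)) lies in the open interval (−2,−1), and there does not exist a connected signed graph Σ on n vertices such that λ_n(D^min(Σ)) lies in the open interval (−2,−1). -/

import Mathlib

/-- The least (real) eigenvalue `λₙ` of a matrix. -/
noncomputable def lambdaMin {V : Type*} [Fintype V] (M : Matrix V V ℝ) : ℝ :=
  sInf {μ : ℝ | ∃ x : V → ℝ, x ≠ 0 ∧ M.mulVec x = μ • x}

/-- The sign of a walk: the product of the signs of its edges. -/
noncomputable def walkSign {V : Type*} {G : SimpleGraph V} (σ : V → V → ℝ)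
    {u v : V} (p : G.Walk u v) : ℝ :=
  (p.darts.map fun d => σ d.toProd.1 d.toProd.2).prod

/-- `σ` is a signature for `G`: symmetric, and `±1` on every edge. -/
def EdgeSigns {V : Type*} (G : SimpleGraph V) (σ : V → V → ℝ) : Prop :=
  (∀ u v, σ u v = σ v u) ∧ ∀ u v, G.Adj u v → σ u v = 1 ∨ σ u v = -1

/-- A signed graph is balanced if every cycle has positive sign. -/
def IsBalanced {V : Type*} (G : SimpleGraph V) (σ : V → V → ℝ) : Prop :=
  ∀ (u : V) (p : G.Walk u u), p.IsCycle → walkSign σ p = 1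

/-- `σ_max(u,v)`: the maximum sign of a shortest `u`–`v` path. -/
noncomputable def sigmaMax {V : Type*} (G : SimpleGraph V) (σ : V → V → ℝ) (u v : V) : ℝ :=
  sSup {s : ℝ | ∃ p : G.Walk u v, p.length = G.dist u v ∧ walkSign σ p = s}

/-- `σ_min(u,v)`: the minimum sign of a shortest `u`–`v` path. -/
noncomputable def sigmaMin {V : Type*} (G : SimpleGraph V) (σ : V → V → ℝ) (u v : V) : ℝ :=
  sInf {s : ℝ | ∃ p : G.Walk u v, p.length = G.dist u v ∧ walkSign σ p = s}

/-- The signed distance matrix `D^max(Σ)`. -/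
noncomputable def Dmax {V : Type*} (G : SimpleGraph V) (σ : V → V → ℝ) : Matrix V V ℝ :=
  fun u v => sigmaMax G σ u v * (G.dist u v : ℝ)

/-- The signed distance matrix `D^min(Σ)`. -/
noncomputable def Dmin {V : Type*} (G : SimpleGraph V) (σ : V → V → ℝ) : Matrix V V ℝ :=
  fun u v => sigmaMin G σ u v * (G.dist u v : ℝ)

/-- `G` has diameter `d`. -/
def HasDiameter {V : Type*} (G : SimpleGraph V) (d : ℕ) : Prop :=
  (∀ u v, G.dist u v ≤ d) ∧ ∃ u v, G.dist u v = d

/-! ### Auxiliary spectral lemmas -/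

section Spectral

open Matrix

lemma aux_bddBelow {n : ℕ} (M : Matrix (Fin n) (Fin n) ℝ) :
    BddBelow {μ : ℝ | ∃ x : Fin n → ℝ, x ≠ 0 ∧ M.mulVec x = μ • x} := by
  set T := Matrix.toEuclideanLin M with hT
  set Tc := LinearMap.toContinuousLinearMap T with hTc
  refine ⟨-‖Tc‖, ?_⟩
  rintro μ ⟨x, hx, hEq⟩
  set y : EuclideanSpace ℝ (Fin n) := (WithLp.equiv 2 (Fin n → ℝ)).symm x with hy
  have hy0 : y ≠ 0 := by simpa [hy] using hx
  have hTy : Tc y = μ • y := by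
    show T y = μ • y
    rw [hy, Matrix.toEuclideanLin_apply_piLp_toLp]; show WithLp.toLp 2 (M *ᵥ x) = _; rw [hEq]
    rfl
  have h1 : ‖Tc y‖ ≤ ‖Tc‖ * ‖y‖ := Tc.le_opNorm y
  rw [hTy, norm_smul, Real.norm_eq_abs] at h1
  have hny : 0 < ‖y‖ := norm_pos_iff.2 hy0
  have h2 : |μ| ≤ ‖Tc‖ := (mul_le_mul_iff_left₀ hny).1 h1
  have h3 := neg_abs_le μ
  linarith

lemma aux_rayleigh {n : ℕ} (M : Matrix (Fin n) (Fin n) ℝ) (hsym : M.IsHermitian)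
    (x : Fin n → ℝ) (hx : x ≠ 0) :
    ∃ μ ∈ {μ : ℝ | ∃ y : Fin n → ℝ, y ≠ 0 ∧ M.mulVec y = μ • y},
      μ * (∑ i, x i ^ 2) ≤ ∑ i, M.mulVec x i * x i := by
  set T := Matrix.toEuclideanLin M with hTdef
  have hT : T.IsSymmetric := Matrix.isHermitian_iff_isSymmetric.1 hsym
  set x' : EuclideanSpace ℝ (Fin n) := (WithLp.equiv 2 (Fin n → ℝ)).symm x with hx'def
  have hx' : x' ≠ 0 := by simpa [hx'def] using hx
  haveI : Nontrivial (EuclideanSpace ℝ (Fin n)) := nontrivial_of_ne x' 0 hx'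
  set μ : ℝ := ⨅ y : { y : EuclideanSpace ℝ (Fin n) // y ≠ 0 },
      (inner ℝ (T y) (y : EuclideanSpace ℝ (Fin n)) : ℝ) / ‖(y : EuclideanSpace ℝ (Fin n))‖ ^ 2
    with hμdef
  have hev : Module.End.HasEigenvalue T μ := by
    have := LinearMap.IsSymmetric.hasEigenvalue_iInf_of_finiteDimensional hT
      (E := EuclideanSpace ℝ (Fin n))
    simpa using this
  obtain ⟨v, hv⟩ := hev.exists_hasEigenvector
  refine ⟨μ, ⟨WithLp.equiv 2 (Fin n → ℝ) v, ?_, ?_⟩, ?_⟩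
  · simpa using hv.right
  · have h := hv.apply_eq_smul
    have h2 : M.mulVec (WithLp.equiv 2 (Fin n → ℝ) v) = WithLp.equiv 2 (Fin n → ℝ) (T v) := rfl
    rw [h2, h]; rfl
  · set Tc := LinearMap.toContinuousLinearMap T with hTc
    have hbdd : BddBelow (Set.range fun y : { y : EuclideanSpace ℝ (Fin n) // y ≠ 0 } =>
        (inner ℝ (T y) (y : EuclideanSpace ℝ (Fin n)) : ℝ) /
          ‖(y : EuclideanSpace ℝ (Fin n))‖ ^ 2) := by
      refine ⟨-‖Tc‖, ?_⟩
      rintro r ⟨⟨y, hy0⟩, rfl⟩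
      have hny : 0 < ‖y‖ := norm_pos_iff.2 hy0
      have hsq : (0:ℝ) < ‖y‖ ^ 2 := pow_pos hny 2
      have h1 : -(‖T y‖ * ‖y‖) ≤ (inner ℝ (T y) y : ℝ) := by
        have ha := abs_real_inner_le_norm (T y) y
        have hb := neg_abs_le (inner ℝ (T y) y : ℝ)
        linarith
      have h2 : ‖T y‖ ≤ ‖Tc‖ * ‖y‖ := Tc.le_opNorm y
      show -‖Tc‖ ≤ (inner ℝ (T y) y : ℝ) / ‖y‖ ^ 2
      rw [le_div_iff₀ hsq]
      nlinarith [norm_nonneg (T y)]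
    have hle : μ ≤ (inner ℝ (T x') x' : ℝ) / ‖x'‖ ^ 2 := ciInf_le hbdd ⟨x', hx'⟩
    have hn2 : (0:ℝ) < ‖x'‖ ^ 2 := pow_pos (norm_pos_iff.2 hx') 2
    have hmu : μ * ‖x'‖ ^ 2 ≤ (inner ℝ (T x') x' : ℝ) := by
      rw [← le_div_iff₀ hn2]; exact hle
    have hnorm : ‖x'‖ ^ 2 = ∑ i, x i ^ 2 := by
      rw [← real_inner_self_eq_norm_sq]
      rw [hx'def, PiLp.inner_apply]
      simp [sq]
    have hinner : (inner ℝ (T x') x' : ℝ) = ∑ i, M.mulVec x i * x i := by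
      have h2 : T x' = (WithLp.equiv 2 (Fin n → ℝ)).symm (M.mulVec x) := by
        rw [hx'def]; exact Matrix.toEuclideanLin_apply_piLp_toLp M x
      rw [h2]
      simp [hx'def, PiLp.inner_apply, mul_comm]
    rw [← hnorm, ← hinner]
    exact hmu

lemma aux_sum_sq_pos {n : ℕ} {x : Fin n → ℝ} (hx : x ≠ 0) : 0 < ∑ i, x i ^ 2 := by
  obtain ⟨i, hi⟩ := Function.ne_iff.1 hx
  exact Finset.sum_pos' (fun j _ => sq_nonneg _)
    ⟨i, Finset.mem_univ i, lt_of_le_of_ne (sq_nonneg _) (Ne.symm (pow_ne_zero 2 hi))⟩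

lemma aux_quad_of_eig {n : ℕ} (M : Matrix (Fin n) (Fin n) ℝ) {μ : ℝ} {x : Fin n → ℝ}
    (h : M.mulVec x = μ • x) :
    μ * ∑ i, x i ^ 2 = ∑ i, M.mulVec x i * x i := by
  rw [h]
  simp only [Pi.smul_apply, smul_eq_mul, Finset.mul_sum]
  exact Finset.sum_congr rfl fun i _ => by ring

/-- The key spectral dichotomy lemma. -/
lemma aux_key {n : ℕ} (M : Matrix (Fin n) (Fin n) ℝ) (hherm : M.IsHermitian)
    (hcase :
      (∃ s : Fin n → ℝ, (∀ i, s i = 1 ∨ s i = -1) ∧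
        ∀ i j, M i j = s i * s j - if i = j then 1 else 0) ∨
      (∃ x : Fin n → ℝ, x ≠ 0 ∧ ∑ i, M.mulVec x i * x i ≤ -2 * ∑ i, x i ^ 2)) :
    lambdaMin M ∉ Set.Ioo (-2 : ℝ) (-1) := by
  intro hmem
  obtain ⟨hm2, hm1⟩ := hmem
  set S := {μ : ℝ | ∃ x : Fin n → ℝ, x ≠ 0 ∧ M.mulVec x = μ • x} with hSdef
  have hLM : lambdaMin M = sInf S := rfl
  rcases hcase with ⟨s, hspm, hsM⟩ | ⟨x, hx, hq⟩
  · -- all eigenvalues are ≥ -1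
    have hge : ∀ μ ∈ S, (-1 : ℝ) ≤ μ := by
      rintro μ ⟨x, hx, hEq⟩
      have hpos := aux_sum_sq_pos hx
      have hquad := aux_quad_of_eig M hEq
      have hmul : ∀ i, M.mulVec x i = (∑ j, s j * x j) * s i - x i := by
        intro i
        simp only [Matrix.mulVec, dotProduct]
        have h1 : ∀ j ∈ Finset.univ, M i j * x j
            = s i * (s j * x j) - (if j = i then 1 else 0) * x j := by
          intro j _
          rw [hsM i j]
          by_cases h : i = j
          · subst h
            rcases hspm i with h' | h' <;> rw [h'] <;> simp <;> ring
          · rw [if_neg h, if_neg (Ne.symm h)]; ring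
        rw [Finset.sum_congr rfl h1, Finset.sum_sub_distrib, ← Finset.mul_sum]
        have h2 : ∑ j, (if j = i then (1:ℝ) else 0) * x j = x i := by
          simp [ite_mul]
        rw [h2]; ring
      have hsum : ∑ i, M.mulVec x i * x i =
          (∑ j, s j * x j) * (∑ i, s i * x i) - ∑ i, x i ^ 2 := by
        have h1 : ∀ i ∈ Finset.univ, M.mulVec x i * x i
            = (∑ j, s j * x j) * (s i * x i) - x i ^ 2 := by
          intro i _; rw [hmul i]; ring
        rw [Finset.sum_congr rfl h1, Finset.sum_sub_distrib, ← Finset.mul_sum]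
      rw [hsum] at hquad
      nlinarith [sq_nonneg (∑ j, s j * x j)]
    by_cases hS : S.Nonempty
    · have := le_csInf hS hge
      rw [hLM] at hm1
      linarith
    · rw [Set.not_nonempty_iff_eq_empty] at hS
      rw [hLM, hS, Real.sInf_empty] at hm1
      linarith
  · obtain ⟨μ, hμS, hray⟩ := aux_rayleigh M hherm x hx
    have hpos := aux_sum_sq_pos hx
    have hμle : μ ≤ -2 := by nlinarith
    have hle : sInf S ≤ μ := csInf_le (aux_bddBelow M) hμS
    rw [hLM] at hm2
    linarith

end Spectral

/-! ### Graph sign lemmas -/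

section Graph

variable {V : Type*} {G : SimpleGraph V} {σ : V → V → ℝ}

lemma walkSign_pm (hσ : EdgeSigns G σ) {u v : V} (p : G.Walk u v) :
    walkSign σ p = 1 ∨ walkSign σ p = -1 := by
  induction p with
  | nil => left; simp [walkSign]
  | cons h p ih =>
      have hd := hσ.2 _ _ h
      unfold walkSign at ih ⊢
      simp only [SimpleGraph.Walk.darts_cons, List.map_cons, List.prod_cons]
      rcases hd with h1 | h1 <;> rcases ih with h2 | h2 <;> simp [h1, h2]

lemma walkSign_reverse (hσ : EdgeSigns G σ) {u v : V} (p : G.Walk u v) :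
    walkSign σ p.reverse = walkSign σ p := by
  unfold walkSign
  rw [SimpleGraph.Walk.darts_reverse, List.map_reverse, List.prod_reverse, List.map_map]
  congr 1
  refine List.map_congr_left ?_
  intro d _
  exact hσ.1 _ _

lemma signSet_comm (hσ : EdgeSigns G σ) (u v : V) :
    {s : ℝ | ∃ p : G.Walk u v, p.length = G.dist u v ∧ walkSign σ p = s} =
    {s : ℝ | ∃ p : G.Walk v u, p.length = G.dist v u ∧ walkSign σ p = s} := by
  ext s
  constructor
  · rintro ⟨p, hl, hs⟩
    exact ⟨p.reverse, by rw [SimpleGraph.Walk.length_reverse, hl, SimpleGraph.dist_comm],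
      by rw [walkSign_reverse hσ, hs]⟩
  · rintro ⟨p, hl, hs⟩
    exact ⟨p.reverse, by rw [SimpleGraph.Walk.length_reverse, hl, SimpleGraph.dist_comm],
      by rw [walkSign_reverse hσ, hs]⟩

lemma sigmaMax_comm (hσ : EdgeSigns G σ) (u v : V) :
    sigmaMax G σ u v = sigmaMax G σ v u := by
  unfold sigmaMax; rw [signSet_comm hσ]

lemma sigmaMin_comm (hσ : EdgeSigns G σ) (u v : V) :
    sigmaMin G σ u v = sigmaMin G σ v u := by
  unfold sigmaMin; rw [signSet_comm hσ]

lemma sigmaMax_pm (hσ : EdgeSigns G σ) {u v : V} (hr : G.Reachable u v) :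
    sigmaMax G σ u v = 1 ∨ sigmaMax G σ u v = -1 := by
  obtain ⟨p, hp⟩ := hr.exists_walk_length_eq_dist
  set S := {s : ℝ | ∃ p : G.Walk u v, p.length = G.dist u v ∧ walkSign σ p = s} with hS
  have hne : S.Nonempty := ⟨walkSign σ p, p, hp, rfl⟩
  have hsub : ∀ s ∈ S, s = 1 ∨ s = -1 := by
    rintro s ⟨q, _, rfl⟩; exact walkSign_pm hσ q
  have hbdd : BddAbove S := ⟨1, by intro s hs; rcases hsub s hs with h | h <;> rw [h] <;> norm_num⟩
  by_cases h1 : (1:ℝ) ∈ S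
  · left
    refine le_antisymm (csSup_le hne ?_) (le_csSup hbdd h1)
    intro s hs; rcases hsub s hs with h | h <;> rw [h] <;> norm_num
  · right
    have : S = {-1} := by
      apply Set.eq_singleton_iff_nonempty_unique_mem.2
      refine ⟨hne, ?_⟩
      intro s hs
      rcases hsub s hs with h | h
      · exact absurd (h ▸ hs) h1
      · exact h
    rw [sigmaMax, ← hS, this, csSup_singleton]

lemma sigmaMin_pm (hσ : EdgeSigns G σ) {u v : V} (hr : G.Reachable u v) :
    sigmaMin G σ u v = 1 ∨ sigmaMin G σ u v = -1 := by
  obtain ⟨p, hp⟩ := hr.exists_walk_length_eq_dist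
  set S := {s : ℝ | ∃ p : G.Walk u v, p.length = G.dist u v ∧ walkSign σ p = s} with hS
  have hne : S.Nonempty := ⟨walkSign σ p, p, hp, rfl⟩
  have hsub : ∀ s ∈ S, s = 1 ∨ s = -1 := by
    rintro s ⟨q, _, rfl⟩; exact walkSign_pm hσ q
  have hbdd : BddBelow S := ⟨-1, by intro s hs; rcases hsub s hs with h | h <;> rw [h] <;> norm_num⟩
  by_cases h1 : (-1:ℝ) ∈ S
  · right
    refine le_antisymm (csInf_le hbdd h1) (le_csInf hne ?_)
    intro s hs; rcases hsub s hs with h | h <;> rw [h] <;> norm_num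
  · left
    have : S = {1} := by
      apply Set.eq_singleton_iff_nonempty_unique_mem.2
      refine ⟨hne, ?_⟩
      intro s hs
      rcases hsub s hs with h | h
      · exact h
      · exact absurd (h ▸ hs) h1
    rw [sigmaMin, ← hS, this, csInf_singleton]

end Graph

/-! ### Support-sum helpers -/

section Supp

lemma aux_sum3 {n : ℕ} {u v w : Fin n} (huv : u ≠ v) (huw : u ≠ w) (hvw : v ≠ w)
    (a b c : ℝ) (g : Fin n → ℝ) :
    ∑ i, g i * (if i = u then a else if i = v then b else if i = w then c else 0)
      = g u * a + g v * b + g w * c := by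
  have hz : ∀ x ∈ Finset.univ, x ∉ ({u, v, w} : Finset (Fin n)) →
      g x * (if x = u then a else if x = v then b else if x = w then c else 0) = 0 := by
    intro x _ hx
    simp only [Finset.mem_insert, Finset.mem_singleton, not_or] at hx
    simp [hx.1, hx.2.1, hx.2.2]
  rw [← Finset.sum_subset (Finset.subset_univ ({u, v, w} : Finset (Fin n))) hz]
  rw [Finset.sum_insert (by simp [huv, huw]), Finset.sum_insert (by simp [hvw]),
    Finset.sum_singleton]
  have h1 : (if u = u then a else if u = v then b else if u = w then c else 0) = a := by simp
  have h2 : (if v = u then a else if v = v then b else if v = w then c else 0) = b := by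
    simp [Ne.symm huv]
  have h3 : (if w = u then a else if w = v then b else if w = w then c else 0) = c := by
    simp [Ne.symm huw, Ne.symm hvw]
  rw [h1, h2, h3]
  ring

lemma aux_sum2 {n : ℕ} {u v : Fin n} (huv : u ≠ v) (a b : ℝ) (g : Fin n → ℝ) :
    ∑ i, g i * (if i = u then a else if i = v then b else 0) = g u * a + g v * b := by
  have hz : ∀ x ∈ Finset.univ, x ∉ ({u, v} : Finset (Fin n)) →
      g x * (if x = u then a else if x = v then b else 0) = 0 := by
    intro x _ hx
    simp only [Finset.mem_insert, Finset.mem_singleton, not_or] at hx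
    simp [hx.1, hx.2]
  rw [← Finset.sum_subset (Finset.subset_univ ({u, v} : Finset (Fin n))) hz]
  rw [Finset.sum_insert (by simp [huv]), Finset.sum_singleton]
  have h1 : (if u = u then a else if u = v then b else 0) = a := by simp
  have h2 : (if v = u then a else if v = v then b else 0) = b := by simp [Ne.symm huv]
  rw [h1, h2]

end Supp

/-! ### The main auxiliary lemma -/

lemma aux_main {n : ℕ} (G : SimpleGraph (Fin n)) (hG : G.Connected)
    (ε : Fin n → Fin n → ℝ) (hcomm : ∀ u v, ε u v = ε v u)
    (hpm : ∀ u v, ε u v = 1 ∨ ε u v = -1) :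
    lambdaMin (fun u v => ε u v * (G.dist u v : ℝ)) ∉ Set.Ioo (-2 : ℝ) (-1) := by
  set M : Matrix (Fin n) (Fin n) ℝ := fun u v => ε u v * (G.dist u v : ℝ) with hM
  have hsymm : ∀ u v, M u v = M v u := by
    intro u v
    show ε u v * (G.dist u v : ℝ) = ε v u * (G.dist v u : ℝ)
    rw [hcomm, SimpleGraph.dist_comm]
  have hherm : M.IsHermitian := by
    unfold Matrix.IsHermitian
    ext u v
    simp only [Matrix.conjTranspose_apply, RCLike.star_def, RCLike.conj_to_real]
    exact hsymm v u
  have hdiag : ∀ u, M u u = 0 := by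
    intro u
    show ε u u * (G.dist u u : ℝ) = 0
    simp [SimpleGraph.dist_self]
  apply aux_key M hherm
  by_cases hd : ∀ u v : Fin n, G.dist u v ≤ 1
  · have hent : ∀ u v : Fin n, u ≠ v → M u v = ε u v := by
      intro u v huv
      have h0 : G.dist u v ≠ 0 := fun h => huv (hG.dist_eq_zero_iff.1 h)
      have h1 : G.dist u v = 1 := le_antisymm (hd u v) (Nat.one_le_iff_ne_zero.2 h0)
      show ε u v * (G.dist u v : ℝ) = ε u v
      rw [h1]; simp
    have hpm' : ∀ u v : Fin n, u ≠ v → M u v = 1 ∨ M u v = -1 := by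
      intro u v huv
      rw [hent u v huv]; exact hpm u v
    by_cases htri : ∃ u v w : Fin n, u ≠ v ∧ u ≠ w ∧ v ≠ w ∧ M u v * M u w * M v w = -1
    · right
      obtain ⟨u, v, w, huv, huw, hvw, hprod⟩ := htri
      set α := M u v with hα
      set β := M u w with hβ
      set γ := M v w with hγ
      have hα2 : α * α = 1 := by rcases hpm' u v huv with h | h <;> rw [hα, h] <;> norm_num
      have hβ2 : β * β = 1 := by rcases hpm' u w huw with h | h <;> rw [hβ, h] <;> norm_num
      set x : Fin n → ℝ := fun i => if i = u then 1 else if i = v then -α else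
        if i = w then -β else 0 with hxdef
      have hxeq : ∀ i, (if i = u then (1:ℝ) else if i = v then -α else
          if i = w then -β else 0) = x i := fun _ => rfl
      have hxu : x u = 1 := by simp [hxdef]
      have hxv : x v = -α := by simp [hxdef, Ne.symm huv]
      have hxw : x w = -β := by simp [hxdef, Ne.symm huw, Ne.symm hvw]
      have hxne : x ≠ 0 := by
        intro h
        have := congrFun h u
        rw [hxu] at this
        simp at this
      refine ⟨x, hxne, ?_⟩
      have hsum2 : ∑ i, x i ^ 2 = 1 * 1 + (-α) * (-α) + (-β) * (-β) := by
        have h1 : ∀ i ∈ Finset.univ, x i ^ 2 = x i * x i := fun i _ => sq (x i)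
        rw [Finset.sum_congr rfl h1]
        have h2 := aux_sum3 huv huw hvw 1 (-α) (-β) x
        simp only [hxeq] at h2
        rw [h2, hxu, hxv, hxw]
      have hmv : ∀ i, M.mulVec x i = M i u * 1 + M i v * (-α) + M i w * (-β) := by
        intro i
        show ∑ j, M i j * x j = _
        have h2 := aux_sum3 huv huw hvw 1 (-α) (-β) (M i)
        simp only [hxeq] at h2
        exact h2
      have hq : ∑ i, M.mulVec x i * x i
          = M.mulVec x u * 1 + M.mulVec x v * (-α) + M.mulVec x w * (-β) := by
        have h2 := aux_sum3 huv huw hvw 1 (-α) (-β) (M.mulVec x)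
        simp only [hxeq] at h2
        exact h2
      rw [hq, hsum2, hmv u, hmv v, hmv w, hdiag u, hdiag v, hdiag w,
        ← hsymm u v, ← hsymm u w, ← hsymm v w, ← hα, ← hβ, ← hγ]
      have h6 : 0 * 1 + α * (-α) + β * (-β) + (α * 1 + 0 * (-α) + γ * (-β)) * (-α)
          + (β * 1 + γ * (-α) + 0 * (-β)) * (-β)
          = -2 * (1 * 1 + (-α) * (-α) + (-β) * (-β)) := by
        have : α * β * γ = -1 := hprod
        nlinarith [hα2, hβ2, this]
      linarith [le_of_eq h6]
    · left
      push_neg at htri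
      have hpos3 : ∀ u v w : Fin n, u ≠ v → u ≠ w → v ≠ w →
          M u v * M u w * M v w = 1 := by
        intro u v w huv huw hvw
        have hne := htri u v w huv huw hvw
        rcases hpm' u v huv with h1 | h1 <;> rcases hpm' u w huw with h2 | h2 <;>
          rcases hpm' v w hvw with h3 | h3 <;>
          rw [h1, h2, h3] at hne ⊢ <;> revert hne <;> norm_num
      rcases isEmpty_or_nonempty (Fin n) with hE | hNE
      · refine ⟨fun _ => 1, fun i => Or.inl rfl, fun i => (hE.false i).elim⟩
      · set w₀ : Fin n := Classical.arbitrary (Fin n) with hw₀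
        set s : Fin n → ℝ := fun i => if i = w₀ then 1 else M i w₀ with hsdef
        have hsw : s w₀ = 1 := by simp [hsdef]
        have hsv : ∀ i, i ≠ w₀ → s i = M i w₀ := by
          intro i hi; simp [hsdef, hi]
        have hspm : ∀ i, s i = 1 ∨ s i = -1 := by
          intro i
          by_cases h : i = w₀
          · subst h; rw [hsw]; exact Or.inl rfl
          · rw [hsv i h]; exact hpm' i w₀ h
        refine ⟨s, hspm, ?_⟩
        intro i j
        by_cases hij : i = j
        · subst hij
          rw [if_pos rfl, hdiag i]
          rcases hspm i with h | h <;> rw [h] <;> norm_num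
        · rw [if_neg hij]
          by_cases hiw : i = w₀
          · have hjw : j ≠ w₀ := fun h => hij (by rw [hiw, h])
            rw [hiw]
            rw [hsw, hsv j hjw, hsymm w₀ j]
            ring
          · by_cases hjw : j = w₀
            · rw [hjw, hsw, hsv i hiw]
              ring
            · rw [hsv i hiw, hsv j hjw]
              have h3 := hpos3 i j w₀ hij hiw hjw
              have h4 : M j w₀ * M j w₀ = 1 := by
                rcases hpm' j w₀ hjw with h | h <;> rw [h] <;> norm_num
              have h5 : M i w₀ * M i w₀ = 1 := by
                rcases hpm' i w₀ hiw with h | h <;> rw [h] <;> norm_num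
              rcases hpm' i j hij with h | h <;> rcases hpm' i w₀ hiw with h' | h' <;>
                rcases hpm' j w₀ hjw with h'' | h'' <;>
                rw [h, h', h''] at h3 ⊢ <;> revert h3 <;> norm_num
  · right
    push_neg at hd
    obtain ⟨u, v, hduv⟩ := hd
    have huv : u ≠ v := by
      intro h
      subst h
      rw [SimpleGraph.dist_self] at hduv
      omega
    have hd2 : (2 : ℝ) ≤ (G.dist u v : ℝ) := by
      have : 2 ≤ G.dist u v := hduv
      exact_mod_cast this
    set e := ε u v with he
    have he2 : e * e = 1 := by rcases hpm u v with h | h <;> rw [he, h] <;> norm_num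
    set x : Fin n → ℝ := fun i => if i = u then 1 else if i = v then -e else 0 with hxdef
    have hxeq : ∀ i, (if i = u then (1:ℝ) else if i = v then -e else 0) = x i :=
      fun _ => rfl
    have hxu : x u = 1 := by simp [hxdef]
    have hxv : x v = -e := by simp [hxdef, Ne.symm huv]
    have hxne : x ≠ 0 := by
      intro h
      have := congrFun h u
      rw [hxu] at this
      simp at this
    refine ⟨x, hxne, ?_⟩
    have hsum2 : ∑ i, x i ^ 2 = 1 * 1 + (-e) * (-e) := by
      have h1 : ∀ i ∈ Finset.univ, x i ^ 2 = x i * x i := fun i _ => sq (x i)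
      rw [Finset.sum_congr rfl h1]
      have h2 := aux_sum2 huv 1 (-e) x
      simp only [hxeq] at h2
      rw [h2, hxu, hxv]
    have hmv : ∀ i, M.mulVec x i = M i u * 1 + M i v * (-e) := by
      intro i
      show ∑ j, M i j * x j = _
      have h2 := aux_sum2 huv 1 (-e) (M i)
      simp only [hxeq] at h2
      exact h2
    have hq : ∑ i, M.mulVec x i * x i = M.mulVec x u * 1 + M.mulVec x v * (-e) := by
      have h2 := aux_sum2 huv 1 (-e) (M.mulVec x)
      simp only [hxeq] at h2
      exact h2
    rw [hq, hsum2, hmv u, hmv v, hdiag u, hdiag v, ← hsymm u v]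
    have hMuv : M u v = e * (G.dist u v : ℝ) := rfl
    rw [hMuv]
    nlinarith [he2, hd2]

/-- There is no connected signed graph whose least `D^max`-eigenvalue lies
in the open interval `(-2, -1)`, and none whose least `D^min`-eigenvalue lies in `(-2, -1)`. -/
theorem stmt15 (n : ℕ) (G : SimpleGraph (Fin n)) (σ : Fin n → Fin n → ℝ)
    (hG : G.Connected) (hσ : EdgeSigns G σ) :
    ¬ lambdaMin (Dmax G σ) ∈ Set.Ioo (-2 : ℝ) (-1) ∧
    ¬ lambdaMin (Dmin G σ) ∈ Set.Ioo (-2 : ℝ) (-1) := by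
  constructor
  · exact aux_main G hG (sigmaMax G σ) (sigmaMax_comm hσ)
      (fun u v => sigmaMax_pm hσ (hG.preconnected u v))
  · exact aux_main G hG (sigmaMin G σ) (sigmaMin_comm hσ)
      (fun u v => sigmaMin_pm hσ (hG.preconnected u v))
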